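/- Let G be a connected graph with maximum degree Δ ≥ 3, γ ≥ 2, and suppose the girth of G is not equal to 2γ+1. Then χ_γ(G) ≤ M, where M = Δ·((Δ-1)^γ - 1)/(Δ-2). -/

import Mathlib

/-- The γ-th power of a graph: two vertices are adjacent iff their distance in G is at most γ. -/
def SimpleGraph.power {V : Type*} (G : SimpleGraph V) (γ : ℕ) : SimpleGraph V where
  Adj u v := u ≠ v ∧ G.Reachable u v ∧ G.dist u v ≤ γ
  symm := ⟨fun u v => by
    rintro ⟨h1, h2, h3⟩
    exact ⟨h1.symm, h2.symm, by rwa [SimpleGraph.dist_comm]⟩⟩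
  loopless := ⟨fun v => by simp⟩

noncomputable instance {V : Type*} (G : SimpleGraph V) (γ : ℕ) :
    DecidableRel (G.power γ).Adj := Classical.decRel _



open Finset SimpleGraph

set_option linter.unusedSectionVars false
set_option linter.unusedVariables false




section Arith

lemma geom_nat (Δ γ : ℕ) (h3 : 3 ≤ Δ) :
    (Δ - 2) * (∑ i ∈ Finset.range γ, (Δ - 1) ^ i) = (Δ - 1) ^ γ - 1 := by
  induction γ with
  | zero => simp
  | succ n ih =>
    rw [Finset.sum_range_succ, Nat.mul_add, ih, pow_succ]
    have hp : 1 ≤ (Δ - 1) ^ n := Nat.one_le_pow _ _ (by omega)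
    have hkey : (Δ-1)^n * (Δ-1) = (Δ-2) * (Δ-1)^n + (Δ-1)^n := by
      have h1 : Δ - 1 = (Δ - 2) + 1 := by omega
      rw [Nat.mul_comm, h1, Nat.add_mul, one_mul]
    omega

lemma M_eq (Δ γ : ℕ) (h3 : 3 ≤ Δ) :
    Δ * ((Δ - 1) ^ γ - 1) / (Δ - 2) = Δ * (∑ i ∈ Finset.range γ, (Δ - 1) ^ i) := by
  rw [← geom_nat Δ γ h3, ← Nat.mul_assoc, Nat.mul_comm Δ (Δ-2), Nat.mul_assoc,
    Nat.mul_div_cancel_left _ (by omega : 0 < Δ - 2)]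

end Arith

section Greedy

variable {V : Type*} [Fintype V] [DecidableEq V] (H : SimpleGraph V) [DecidableRel H.Adj]
variable (f : V → ℕ)

/-- the set of neighbors of `v` that come strictly earlier in the order `f`. -/
def gearlier (v : V) : Finset V := (H.neighborFinset v).filter (fun w => f w < f v)

omit [DecidableEq V] in
lemma mem_gearlier {v w : V} : w ∈ gearlier H f v ↔ H.Adj v w ∧ f w < f v := by
  simp [gearlier]

/-- greedy coloring along the order `f`. -/
noncomputable def greedyC (v : V) : ℕ :=
  sInf {c : ℕ | c ∉ ((gearlier H f v).attach.image (fun w => greedyC w.1))}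
termination_by f v
decreasing_by
  have := w.2
  simp only [gearlier, Finset.mem_filter] at this
  exact this.2

/-- the finset of colors used by earlier neighbors of `v`. -/
noncomputable def gused (v : V) : Finset ℕ := (gearlier H f v).image (greedyC H f)

lemma gused_eq (v : V) :
    ((gearlier H f v).attach.image (fun w => greedyC H f w.1)) = gused H f v := by
  unfold gused
  ext c
  simp

lemma greedyC_eq (v : V) : greedyC H f v = sInf {c : ℕ | c ∉ gused H f v} := by
  rw [greedyC, gused_eq]

lemma greedy_set_nonempty (v : V) : {c : ℕ | c ∉ gused H f v}.Nonempty := by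
  obtain ⟨c, hc⟩ := Infinite.exists_notMem_finset (gused H f v)
  exact ⟨c, hc⟩

lemma greedyC_not_mem (v : V) : greedyC H f v ∉ gused H f v := by
  rw [greedyC_eq]
  exact Nat.sInf_mem (greedy_set_nonempty H f v)

lemma greedyC_le (v : V) : greedyC H f v ≤ (gused H f v).card := by
  rw [greedyC_eq]
  have : ∃ c ∈ Finset.range ((gused H f v).card + 1), c ∉ gused H f v := by
    by_contra hc
    push_neg at hc
    have hsub : Finset.range ((gused H f v).card + 1) ⊆ gused H f v := fun c h => hc c h
    have := Finset.card_le_card hsub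
    simp at this
  obtain ⟨c, hc1, hc2⟩ := this
  calc sInf {c : ℕ | c ∉ gused H f v} ≤ c := Nat.sInf_le hc2
    _ ≤ (gused H f v).card := by simpa using Nat.lt_succ_iff.mp (Finset.mem_range.mp hc1)

lemma greedyC_valid (hf : Function.Injective f) {u v : V} (h : H.Adj u v) :
    greedyC H f u ≠ greedyC H f v := by
  have hne : f u ≠ f v := fun he => H.ne_of_adj h (hf he)
  rcases lt_or_gt_of_ne hne with hlt | hlt
  · intro he
    apply greedyC_not_mem H f v
    rw [← he]
    exact Finset.mem_image_of_mem _ ((mem_gearlier H f).mpr ⟨h.symm, hlt⟩)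
  · intro he
    apply greedyC_not_mem H f u
    rw [he]
    exact Finset.mem_image_of_mem _ ((mem_gearlier H f).mpr ⟨h, hlt⟩)

/-- main greedy colorability criterion -/
lemma colorable_of_greedy_bound (hf : Function.Injective f) (n : ℕ)
    (hb : ∀ v, (gused H f v).card < n) : H.Colorable n := by
  refine ⟨⟨fun v => ⟨greedyC H f v, lt_of_le_of_lt (greedyC_le H f v) (hb v)⟩, ?_⟩⟩
  intro u v h
  simp only [top_adj, Ne, Fin.mk.injEq]
  exact greedyC_valid H f hf h

end Greedy
set_option linter.unusedSectionVars false


section Count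

variable {V : Type*} [Fintype V] [DecidableEq V] (G : SimpleGraph V) [DecidableRel G.Adj]

lemma exists_parent (hconn : G.Connected) {v x : V} {k : ℕ} (h : G.dist v x = k + 1) :
    ∃ u, G.Adj x u ∧ G.dist v u = k := by
  obtain ⟨p, hp⟩ := (hconn v x).exists_walk_length_eq_dist
  have hq : p.reverse.length = k + 1 := by rw [SimpleGraph.Walk.length_reverse, hp, h]
  cases hq' : p.reverse with
  | nil => rw [hq'] at hq; simp at hq
  | cons hadj q' =>
    rename_i u
    rw [hq'] at hq
    simp only [SimpleGraph.Walk.length_cons] at hq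
    refine ⟨u, hadj, le_antisymm ?_ ?_⟩
    · calc G.dist v u ≤ q'.reverse.length := SimpleGraph.dist_le _
        _ = k := by rw [SimpleGraph.Walk.length_reverse]; omega
    · have h1 : G.dist v x ≤ G.dist v u + G.dist u x := hconn.dist_triangle
      have h2 : G.dist u x ≤ 1 := by
        rw [SimpleGraph.dist_comm]
        exact le_of_eq (SimpleGraph.dist_eq_one_iff_adj.mpr hadj)
      omega

/-- choice of a parent (neighbor strictly closer to `v`). -/
noncomputable def par (hconn : G.Connected) (v x : V) : V :=
  if h : ∃ u, G.Adj x u ∧ G.dist v u = G.dist v x - 1 then h.choose else v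

lemma par_spec (hconn : G.Connected) {v x : V} (h : 0 < G.dist v x) :
    G.Adj x (par G hconn v x) ∧ G.dist v (par G hconn v x) = G.dist v x - 1 := by
  have hex : ∃ u, G.Adj x u ∧ G.dist v u = G.dist v x - 1 := by
    obtain ⟨u, hu1, hu2⟩ := exists_parent G hconn (k := G.dist v x - 1)
      (by omega : G.dist v x = (G.dist v x - 1) + 1)
    exact ⟨u, hu1, hu2⟩
  rw [par, dif_pos hex]
  exact hex.choose_spec

/-- sphere of radius `i` around `v`. -/
noncomputable def sph (v : V) (i : ℕ) : Finset V := univ.filter (fun x => G.dist v x = i)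

lemma mem_sph {v x : V} {i : ℕ} : x ∈ sph G v i ↔ G.dist v x = i := by simp [sph]

lemma sph_zero (hconn : G.Connected) (v : V) : sph G v 0 = {v} := by
  ext x
  simp only [mem_sph, Finset.mem_singleton]
  rw [hconn.dist_eq_zero_iff, eq_comm]

lemma sph_one (v : V) : sph G v 1 = G.neighborFinset v := by
  ext x
  simp only [mem_sph, SimpleGraph.mem_neighborFinset]
  exact SimpleGraph.dist_eq_one_iff_adj

lemma count_step (hconn : G.Connected) (v : V) {i : ℕ} (hi : 1 ≤ i) :
    (sph G v (i + 1)).card ≤ (G.maxDegree - 1) * (sph G v i).card := by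
  have hmap : ∀ x ∈ sph G v (i + 1), par G hconn v x ∈ sph G v i := by
    intro x hx
    rw [mem_sph] at hx ⊢
    have := (par_spec G hconn (v := v) (x := x) (by omega)).2
    omega
  rw [Finset.card_eq_sum_card_fiberwise hmap]
  have hfib : ∀ u ∈ sph G v i,
      ((sph G v (i+1)).filter (fun x => par G hconn v x = u)).card ≤ G.maxDegree - 1 := by
    intro u hu
    rw [mem_sph] at hu
    have hu0 : 0 < G.dist v u := by omega
    obtain ⟨hadj, hdist⟩ := par_spec G hconn hu0
    have hsub : ((sph G v (i+1)).filter (fun x => par G hconn v x = u)) ⊆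
        (G.neighborFinset u).erase (par G hconn v u) := by
      intro x hx
      rw [Finset.mem_filter, mem_sph] at hx
      obtain ⟨hx1, hx2⟩ := hx
      have hps := par_spec G hconn (v := v) (x := x) (by omega)
      rw [hx2] at hps
      refine Finset.mem_erase.mpr ⟨?_, ?_⟩
      · intro he
        rw [he] at hx1
        omega
      · rw [SimpleGraph.mem_neighborFinset]
        exact hps.1.symm
    calc _ ≤ ((G.neighborFinset u).erase (par G hconn v u)).card := Finset.card_le_card hsub
      _ = G.degree u - 1 := by
          rw [Finset.card_erase_of_mem (by rwa [SimpleGraph.mem_neighborFinset])]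
          rfl
      _ ≤ G.maxDegree - 1 := by
          have := G.degree_le_maxDegree u
          omega
  calc ∑ u ∈ sph G v i, ((sph G v (i+1)).filter (fun x => par G hconn v x = u)).card
      ≤ ∑ u ∈ sph G v i, (G.maxDegree - 1) := Finset.sum_le_sum hfib
    _ = (G.maxDegree - 1) * (sph G v i).card := by rw [Finset.sum_const, smul_eq_mul, mul_comm]

lemma sph_chain (hconn : G.Connected) (v : V) (i : ℕ) :
    (sph G v (i + 1)).card ≤ G.degree v * (G.maxDegree - 1) ^ i := by
  induction i with
  | zero => simp [sph_one]
  | succ n ih =>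
    calc (sph G v (n + 2)).card ≤ (G.maxDegree - 1) * (sph G v (n+1)).card :=
          count_step G hconn v (by omega)
      _ ≤ (G.maxDegree - 1) * (G.degree v * (G.maxDegree - 1) ^ n) :=
          Nat.mul_le_mul_left _ ih
      _ = G.degree v * (G.maxDegree - 1) ^ (n + 1) := by ring

lemma power_adj (hconn : G.Connected) {γ : ℕ} {v x : V} :
    (G.power γ).Adj v x ↔ 1 ≤ G.dist v x ∧ G.dist v x ≤ γ := by
  constructor
  · rintro ⟨h1, _, h3⟩
    have : G.dist v x ≠ 0 := by
      simp only [Ne, hconn.dist_eq_zero_iff]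
      exact h1
    omega
  · rintro ⟨h1, h2⟩
    have hne : v ≠ x := by
      intro he
      rw [he, SimpleGraph.dist_self] at h1
      omega
    exact ⟨hne, hconn v x, h2⟩

lemma pdeg_eq (hconn : G.Connected) (γ : ℕ) (v : V) :
    (G.power γ).degree v = ∑ i ∈ Finset.range γ, (sph G v (i + 1)).card := by
  classical
  have h1 : (G.power γ).degree v = ((G.power γ).neighborFinset v).card := rfl
  have h2 : (G.power γ).neighborFinset v = univ.filter (fun x => (G.power γ).Adj v x) := by
    ext x; simp
  have hmap : ∀ x ∈ univ.filter (fun x => (G.power γ).Adj v x),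
      G.dist v x ∈ (Finset.range γ).image (· + 1) := by
    intro x hx
    rw [Finset.mem_filter, power_adj G hconn] at hx
    refine Finset.mem_image.mpr ⟨G.dist v x - 1, Finset.mem_range.mpr (by omega), by omega⟩
  rw [h1, h2, Finset.card_eq_sum_card_fiberwise hmap,
    Finset.sum_image (by intro a _ b _ h; simp only at h; omega)]
  apply Finset.sum_congr rfl
  intro i hi
  rw [Finset.mem_range] at hi
  congr 1
  ext x
  simp only [Finset.mem_filter, Finset.mem_univ, true_and, mem_sph, power_adj G hconn]
  constructor
  · rintro ⟨_, h⟩; exact h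
  · intro h; exact ⟨⟨by omega, by omega⟩, h⟩

lemma ball_bound (hconn : G.Connected) (γ : ℕ) (v : V) :
    (G.power γ).degree v ≤ G.degree v * ∑ i ∈ Finset.range γ, (G.maxDegree - 1) ^ i := by
  rw [pdeg_eq G hconn γ v, Finset.mul_sum]
  exact Finset.sum_le_sum (fun i _ => sph_chain G hconn v i)

lemma ball_bound' (hconn : G.Connected) (γ : ℕ) (v : V) :
    (G.power γ).degree v ≤ G.maxDegree * ∑ i ∈ Finset.range γ, (G.maxDegree - 1) ^ i := by
  calc (G.power γ).degree v ≤ G.degree v * ∑ i ∈ Finset.range γ, (G.maxDegree - 1) ^ i :=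
        ball_bound G hconn γ v
    _ ≤ _ := Nat.mul_le_mul_right _ (G.degree_le_maxDegree v)

end Count

section Del

variable {V : Type*} [Fintype V] [DecidableEq V] (G : SimpleGraph V) [DecidableRel G.Adj]

lemma exists_parent' {H : SimpleGraph V} {v x : V} {k : ℕ} (hr : H.Reachable v x)
    (h : H.dist v x = k + 1) : ∃ u, H.Adj x u ∧ H.dist v u = k := by
  obtain ⟨p, hp⟩ := hr.exists_walk_length_eq_dist
  have hq : p.reverse.length = k + 1 := by rw [SimpleGraph.Walk.length_reverse, hp, h]
  cases hq' : p.reverse with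
  | nil => rw [hq'] at hq; simp at hq
  | cons hadj q' =>
    rename_i u
    rw [hq'] at hq
    simp only [SimpleGraph.Walk.length_cons] at hq
    refine ⟨u, hadj, le_antisymm ?_ ?_⟩
    · calc H.dist v u ≤ q'.reverse.length := SimpleGraph.dist_le _
        _ = k := by rw [SimpleGraph.Walk.length_reverse]; omega
    · by_contra hlt
      push_neg at hlt
      have hru : H.Reachable v u := ⟨q'.reverse⟩
      obtain ⟨r, hr'⟩ := hru.exists_walk_length_eq_dist
      have : H.dist v x ≤ (r.concat hadj.symm).length := SimpleGraph.dist_le _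
      rw [SimpleGraph.Walk.length_concat, hr'] at this
      omega

/-- the power graph with two vertices `a`, `b` made isolated. -/
def Hdel (γ : ℕ) (a b : V) : SimpleGraph V where
  Adj x y := (G.power γ).Adj x y ∧ x ≠ a ∧ x ≠ b ∧ y ≠ a ∧ y ≠ b
  symm := ⟨fun x y => by
    rintro ⟨h1, h2, h3, h4, h5⟩
    exact ⟨h1.symm, h4, h5, h2, h3⟩⟩
  loopless := ⟨fun x => by
    rintro ⟨h1, -⟩
    exact (G.power γ).loopless.irrefl x h1⟩

noncomputable instance (γ : ℕ) (a b : V) : DecidableRel (Hdel G γ a b).Adj :=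
  Classical.decRel _

lemma skip_reach (hconn : G.Connected) {γ : ℕ} (hγ : 2 ≤ γ) {a b : V} (hne : a ≠ b)
    (hab : ¬ G.Adj a b) :
    ∀ (n : ℕ) {x y : V} (W : G.Walk x y), W.length ≤ n →
      x ≠ a → x ≠ b → y ≠ a → y ≠ b → (Hdel G γ a b).Reachable x y := by
  intro n
  induction n using Nat.strong_induction_on with
  | _ n ih =>
    intro x y W hlen hxa hxb hya hyb
    cases W with
    | nil => exact SimpleGraph.Reachable.refl x
    | cons h W' =>
      rename_i z
      simp only [SimpleGraph.Walk.length_cons] at hlen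
      by_cases hza : z = a
      · subst hza
        cases W' with
        | nil => exact absurd rfl hya
        | cons h2 W2 =>
          rename_i z2
          simp only [SimpleGraph.Walk.length_cons] at hlen
          have hz2a : z2 ≠ z := (G.ne_of_adj h2).symm
          have hz2b : z2 ≠ b := by
            intro he; rw [he] at h2; exact hab h2
          by_cases hz2x : z2 = x
          · subst hz2x
            exact ih (n - 2) (by omega) W2 (by omega) hxa hxb hya hyb
          · have hstep : (Hdel G γ z b).Adj x z2 := by
              refine ⟨⟨fun he => hz2x (he.symm), hconn x z2, ?_⟩, hxa, hxb, hz2a, hz2b⟩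
              have : G.dist x z2 ≤ (SimpleGraph.Walk.cons h (SimpleGraph.Walk.cons h2
                SimpleGraph.Walk.nil)).length := SimpleGraph.dist_le _
              simp only [SimpleGraph.Walk.length_cons, SimpleGraph.Walk.length_nil] at this
              omega
            exact (hstep.reachable).trans
              (ih (n - 2) (by omega) W2 (by omega) hz2a hz2b hya hyb)
      · by_cases hzb : z = b
        · subst hzb
          cases W' with
          | nil => exact absurd rfl hyb
          | cons h2 W2 =>
            rename_i z2
            simp only [SimpleGraph.Walk.length_cons] at hlen
            have hz2b : z2 ≠ z := (G.ne_of_adj h2).symm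
            have hz2a : z2 ≠ a := by
              intro he; rw [he] at h2; exact hab h2.symm
            by_cases hz2x : z2 = x
            · subst hz2x
              exact ih (n - 2) (by omega) W2 (by omega) hxa hxb hya hyb
            · have hstep : (Hdel G γ a z).Adj x z2 := by
                refine ⟨⟨fun he => hz2x (he.symm), hconn x z2, ?_⟩, hxa, hxb, hz2a, hz2b⟩
                have : G.dist x z2 ≤ (SimpleGraph.Walk.cons h (SimpleGraph.Walk.cons h2
                  SimpleGraph.Walk.nil)).length := SimpleGraph.dist_le _
                simp only [SimpleGraph.Walk.length_cons, SimpleGraph.Walk.length_nil] at this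
                omega
              exact (hstep.reachable).trans
                (ih (n - 2) (by omega) W2 (by omega) hz2a hz2b hya hyb)
        · have hstep : (Hdel G γ a b).Adj x z := by
            refine ⟨⟨G.ne_of_adj h, hconn x z, ?_⟩, hxa, hxb, hza, hzb⟩
            rw [(SimpleGraph.dist_eq_one_iff_adj).mpr h]
            omega
          exact (hstep.reachable).trans (ih (n - 1) (by omega) W' (by omega) hza hzb hya hyb)

end Del
section CaseTriple

variable {V : Type*} [Fintype V] [DecidableEq V] (G : SimpleGraph V) [DecidableRel G.Adj]

lemma greedyC_of_empty {H : SimpleGraph V} [DecidableRel H.Adj] {f : V → ℕ} {x : V}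
    (h : gearlier H f x = ∅) : greedyC H f x = 0 := by
  rw [greedyC_eq]
  apply Nat.sInf_eq_zero.mpr
  left
  simp [gused, h]

lemma case_triple (hconn : G.Connected) {γ : ℕ} (hγ : 2 ≤ γ) {n : ℕ} (hn : 0 < n)
    (hpd : ∀ x : V, (G.power γ).degree x ≤ n) {v a b : V}
    (hva : (G.power γ).Adj v a) (hvb : (G.power γ).Adj v b) (hab : a ≠ b)
    (hnadj : ¬ (G.power γ).Adj a b) : (G.power γ).Colorable n := by
  classical
  set H := G.power γ with hH
  set H' := Hdel G γ a b with hH'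
  -- basic non-adjacency in G
  have hGab : ¬ G.Adj a b := by
    intro h
    exact hnadj ⟨G.ne_of_adj h, h.reachable, by
      rw [(SimpleGraph.dist_eq_one_iff_adj).mpr h]; omega⟩
  have hva' : v ≠ a := fun he => ((G.power γ).ne_of_adj hva) he
  have hvb' : v ≠ b := fun he => ((G.power γ).ne_of_adj hvb) he
  -- reachability in the deleted graph
  have hreach : ∀ x : V, x ≠ a → x ≠ b → H'.Reachable v x := by
    intro x hxa hxb
    obtain ⟨W⟩ := hconn v x
    exact skip_reach G hconn hγ hab hGab W.length W le_rfl hva' hvb' hxa hxb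
  -- the ordering
  set N : ℕ := Finset.univ.sup (fun x => H'.dist v x) with hN
  have hdvN : ∀ x, H'.dist v x ≤ N := fun x => Finset.le_sup (f := fun x => H'.dist v x) (Finset.mem_univ x)
  set key : V → ℕ := fun x => if x = a ∨ x = b then 0 else 1 + (N - H'.dist v x) with hkey
  set e := Fintype.equivFin V with he
  set f : V → ℕ := fun x => key x * (Fintype.card V) + (e x) with hf
  have hcard : ∀ x, (e x : ℕ) < Fintype.card V := fun x => (e x).isLt
  have hmono : ∀ x y, key x < key y → f x < f y := by
    intro x y hk
    simp only [hf]
    calc key x * Fintype.card V + (e x : ℕ) < key x * Fintype.card V + Fintype.card V := by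
          have := hcard x; omega
      _ = (key x + 1) * Fintype.card V := by ring
      _ ≤ key y * Fintype.card V := Nat.mul_le_mul_right _ (by omega)
      _ ≤ key y * Fintype.card V + (e y : ℕ) := Nat.le_add_right _ _
  have hinj : Function.Injective f := by
    intro x y hxy
    have hx : f x % Fintype.card V = (e x : ℕ) := by
      simp only [hf]
      rw [Nat.mul_add_mod']
      exact Nat.mod_eq_of_lt (hcard x)
    have hy : f y % Fintype.card V = (e y : ℕ) := by
      simp only [hf]
      rw [Nat.mul_add_mod']
      exact Nat.mod_eq_of_lt (hcard y)
    apply e.injective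
    apply Fin.val_injective
    rw [← hx, ← hy, hxy]
  -- key facts
  have hkey0 : ∀ x, key x = 0 ↔ (x = a ∨ x = b) := by
    intro x
    simp only [hkey]
    by_cases h : x = a ∨ x = b <;> simp [h]
  have hearlier_ab : ∀ x, (x = a ∨ x = b) → gearlier H f x = ∅ := by
    intro x hx
    rw [Finset.eq_empty_iff_forall_notMem]
    intro w hw
    rw [mem_gearlier] at hw
    obtain ⟨hadj, hfw⟩ := hw
    have hkw : key w ≤ key x := by
      by_contra hlt
      push_neg at hlt
      exact absurd (hmono _ _ hlt) (by omega)
    have hkx : key x = 0 := (hkey0 x).mpr hx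
    have hw0 : w = a ∨ w = b := (hkey0 w).mp (by omega)
    rcases hx with rfl | rfl <;> rcases hw0 with rfl | rfl
    · exact H.loopless.irrefl _ hadj
    · exact hnadj hadj
    · exact hnadj hadj.symm
    · exact H.loopless.irrefl _ hadj
  -- main bound
  apply colorable_of_greedy_bound H f hinj n
  intro x
  by_cases hx : x = a ∨ x = b
  · have : gused H f x = ∅ := by simp [gused, hearlier_ab x hx]
    rw [this]
    simpa using hn
  · push_neg at hx
    obtain ⟨hxa, hxb⟩ := hx
    by_cases hxv : x = v
    · -- the last vertex: a and b are earlier neighbors with the same color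
      rw [hxv]
      have hkeyv : 1 ≤ key v := by
        rcases Nat.eq_zero_or_pos (key v) with h0 | h1
        · rcases (hkey0 v).mp h0 with rfl | rfl
          · exact absurd rfl hva'
          · exact absurd rfl hvb'
        · exact h1
      have hfa : f a < f v := hmono _ _ (by rw [(hkey0 a).mpr (Or.inl rfl)]; omega)
      have hfb : f b < f v := hmono _ _ (by rw [(hkey0 b).mpr (Or.inr rfl)]; omega)
      have hmema : a ∈ gearlier H f v := (mem_gearlier H f).mpr ⟨hva, hfa⟩
      have hmemb : b ∈ gearlier H f v := (mem_gearlier H f).mpr ⟨hvb, hfb⟩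
      have hga : greedyC H f a = 0 := greedyC_of_empty (hearlier_ab a (Or.inl rfl))
      have hgb : greedyC H f b = 0 := greedyC_of_empty (hearlier_ab b (Or.inr rfl))
      have hsub : gused H f v ⊆ ((gearlier H f v).erase b).image (greedyC H f) := by
        intro c hc
        rw [gused, Finset.mem_image] at hc
        obtain ⟨w, hw, hwc⟩ := hc
        by_cases hwb : w = b
        · subst hwb
          refine Finset.mem_image.mpr ⟨a, Finset.mem_erase.mpr ⟨hab, hmema⟩, by
            rw [hga, ← hwc, hgb]⟩
        · exact Finset.mem_image.mpr ⟨w, Finset.mem_erase.mpr ⟨hwb, hw⟩, hwc⟩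
      have hEc : (gearlier H f v).card ≤ (G.power γ).degree v := by
        apply Finset.card_le_card
        intro w hw
        rw [mem_gearlier] at hw
        rw [SimpleGraph.mem_neighborFinset]
        exact hw.1
      calc (gused H f v).card ≤ (((gearlier H f v).erase b).image (greedyC H f)).card :=
            Finset.card_le_card hsub
        _ ≤ ((gearlier H f v).erase b).card := Finset.card_image_le
        _ = (gearlier H f v).card - 1 := Finset.card_erase_of_mem hmemb
        _ < n := by
            have := hpd v
            have hc1 : 1 ≤ (gearlier H f v).card := Finset.card_pos.mpr ⟨b, hmemb⟩
            omega
    · -- middle vertices: there is a later neighbor towards v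
      have hrx : H'.Reachable v x := hreach x hxa hxb
      have hd1 : 1 ≤ H'.dist v x := by
        have : H'.dist v x ≠ 0 := by
          rw [SimpleGraph.dist_ne_zero_iff_ne_and_reachable]
          exact ⟨fun h => hxv h.symm, hrx⟩
        omega
      obtain ⟨u, hu1, hu2⟩ := exists_parent' (H := H') hrx
        (by omega : H'.dist v x = (H'.dist v x - 1) + 1)
      obtain ⟨hpadj, hua', hub', hua, hub⟩ := hu1
      have hkxu : key x < key u := by
        simp only [hkey]
        rw [if_neg (by tauto), if_neg (by tauto)]
        have h1 := hdvN x
        omega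
      have hfu : f x < f u := hmono _ _ hkxu
      have hsub : gearlier H f x ⊆ (H.neighborFinset x).erase u := by
        intro w hw
        rw [mem_gearlier] at hw
        refine Finset.mem_erase.mpr ⟨?_, by rw [SimpleGraph.mem_neighborFinset]; exact hw.1⟩
        intro he
        subst he
        omega
      calc (gused H f x).card ≤ (gearlier H f x).card := Finset.card_image_le
        _ ≤ ((H.neighborFinset x).erase u).card := Finset.card_le_card hsub
        _ = H.degree x - 1 := by
            rw [Finset.card_erase_of_mem (by rw [SimpleGraph.mem_neighborFinset]; exact hpadj)]
            rfl
        _ < n := by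
            have h1 : H.degree x ≤ n := hpd x
            have h2 : 1 ≤ H.degree x := by
              rw [← SimpleGraph.card_neighborFinset_eq_degree]
              exact Finset.card_pos.mpr ⟨u, by rw [SimpleGraph.mem_neighborFinset]; exact hpadj⟩
            omega

end CaseTriple
section Complete

variable {V : Type*} [Fintype V] [DecidableEq V] (G : SimpleGraph V) [DecidableRel G.Adj]

lemma no_triple_complete (hconn : G.Connected) {γ : ℕ} (hγ : 2 ≤ γ)
    (hT : ∀ v a b : V, (G.power γ).Adj v a → (G.power γ).Adj v b → a ≠ b → (G.power γ).Adj a b) :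
    ∀ x y : V, x ≠ y → (G.power γ).Adj x y := by
  have key : ∀ (n : ℕ) (x y : V) (W : (G.power γ).Walk x y), W.length ≤ n → x ≠ y →
      (G.power γ).Adj x y := by
    intro n
    induction n using Nat.strong_induction_on with
    | _ n ih =>
      intro x y W hlen hxy
      cases W with
      | nil => exact absurd rfl hxy
      | cons h W' =>
        rename_i z
        simp only [SimpleGraph.Walk.length_cons] at hlen
        cases W' with
        | nil => exact h
        | cons h2 W2 =>
          rename_i z2
          simp only [SimpleGraph.Walk.length_cons] at hlen
          by_cases hz2x : z2 = x
          · subst hz2x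
            exact ih (n - 2) (by omega) _ _ W2 (by omega) hxy
          · have hstep : (G.power γ).Adj x z2 :=
              hT z x z2 h.symm h2 (fun he => hz2x he.symm)
            exact ih (n - 1) (by omega) _ _ (SimpleGraph.Walk.cons hstep W2)
              (by simp only [SimpleGraph.Walk.length_cons]; omega) hxy
  intro x y hxy
  have hle : G ≤ G.power γ := by
    intro u w h
    exact ⟨G.ne_of_adj h, h.reachable, by rw [SimpleGraph.dist_eq_one_iff_adj.mpr h]; omega⟩
  have hr : (G.power γ).Reachable x y := (hconn x y).mono hle
  obtain ⟨W⟩ := hr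
  exact key W.length x y W le_rfl hxy

lemma complete_pdeg (hconn : G.Connected) {γ : ℕ}
    (hcomp : ∀ x y : V, x ≠ y → (G.power γ).Adj x y) (x : V) :
    (G.power γ).degree x = Fintype.card V - 1 := by
  have : (G.power γ).neighborFinset x = Finset.univ.erase x := by
    ext y
    simp only [SimpleGraph.mem_neighborFinset, Finset.mem_erase, Finset.mem_univ, and_true]
    constructor
    · intro h; exact ((G.power γ).ne_of_adj h).symm
    · intro h; exact (hcomp x y (fun he => h he.symm))
  rw [← SimpleGraph.card_neighborFinset_eq_degree, this, Finset.card_erase_of_mem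
    (Finset.mem_univ x), Finset.card_univ]

end Complete

section Rigid

variable {V : Type*} [Fintype V] [DecidableEq V] (G : SimpleGraph V) [DecidableRel G.Adj]
variable (hconn : G.Connected) {Δ γ : ℕ} (hΔ : G.maxDegree = Δ) (h3 : 3 ≤ Δ) (hγ : 2 ≤ γ)
variable (hcomp : ∀ x y : V, x ≠ y → (G.power γ).Adj x y)
variable (hcard : Fintype.card V = Δ * (∑ i ∈ Finset.range γ, (Δ - 1) ^ i) + 1)

include h3 hγ in
lemma Tpos : 0 < ∑ i ∈ Finset.range γ, (Δ - 1) ^ i := by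
  have h0 : (0:ℕ) ∈ Finset.range γ := Finset.mem_range.mpr (by omega)
  have h1 : (Δ - 1) ^ (0:ℕ) ≤ ∑ i ∈ Finset.range γ, (Δ - 1) ^ i :=
    Finset.single_le_sum (f := fun i => (Δ - 1) ^ i) (fun i _ => Nat.zero_le _) h0
  have h2 : (Δ - 1) ^ (0:ℕ) = 1 := pow_zero _
  omega

include hcomp in
lemma dist_le_diam (v x : V) : G.dist v x ≤ γ := by
  by_cases h : v = x
  · rw [h, SimpleGraph.dist_self]; omega
  · exact (hcomp v x h).2.2

include hconn hΔ h3 hγ hcomp hcard in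
lemma rigid_pdeg (v : V) : (G.power γ).degree v = Δ * (∑ i ∈ Finset.range γ, (Δ - 1) ^ i) := by
  rw [complete_pdeg G hconn hcomp v, hcard]
  omega

include hconn hΔ h3 hγ hcomp hcard in
lemma rigid_regular (v : V) : G.degree v = Δ := by
  have h1 : (G.power γ).degree v ≤ G.degree v * ∑ i ∈ Finset.range γ, (Δ - 1) ^ i := by
    have := ball_bound G hconn γ v
    rwa [hΔ] at this
  rw [rigid_pdeg G hconn hΔ h3 hγ hcomp hcard v] at h1
  have h2 : G.degree v ≤ Δ := hΔ ▸ G.degree_le_maxDegree v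
  have hT := Tpos (Δ := Δ) (γ := γ) h3 hγ
  have h4 : Δ ≤ G.degree v := by
    by_contra hlt
    push_neg at hlt
    have : G.degree v * ∑ i ∈ Finset.range γ, (Δ - 1) ^ i <
        Δ * ∑ i ∈ Finset.range γ, (Δ - 1) ^ i := by
      exact (Nat.mul_lt_mul_right hT).mpr hlt
    omega
  omega

include hconn hΔ h3 hγ hcomp hcard in
lemma rigid_sph (v : V) : ∀ i ∈ Finset.range γ, (sph G v (i+1)).card = Δ * (Δ - 1) ^ i := by
  have hle : ∀ i ∈ Finset.range γ, (sph G v (i+1)).card ≤ Δ * (Δ - 1) ^ i := by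
    intro i _
    have := sph_chain G hconn v i
    rwa [rigid_regular G hconn hΔ h3 hγ hcomp hcard v, hΔ] at this
  have hsum : ∑ i ∈ Finset.range γ, (sph G v (i+1)).card
      = ∑ i ∈ Finset.range γ, Δ * (Δ - 1) ^ i := by
    rw [← pdeg_eq G hconn γ v, ← Finset.mul_sum,
      rigid_pdeg G hconn hΔ h3 hγ hcomp hcard v]
  exact fun i hi => (Finset.sum_eq_sum_iff_of_le hle).mp hsum i hi

include hconn hΔ h3 hγ hcomp hcard in
lemma rigid_fiber (v : V) {k : ℕ} (hk : k + 2 ≤ γ) :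
    ∀ u ∈ sph G v (k+1),
      ((sph G v (k+2)).filter (fun x => par G hconn v x = u)).card = Δ - 1 := by
  have hmap : ∀ x ∈ sph G v (k + 2), par G hconn v x ∈ sph G v (k+1) := by
    intro x hx
    rw [mem_sph] at hx ⊢
    have := (par_spec G hconn (v := v) (x := x) (by omega)).2
    omega
  have hfib : ∀ u ∈ sph G v (k+1),
      ((sph G v (k+2)).filter (fun x => par G hconn v x = u)).card ≤ Δ - 1 := by
    intro u hu
    rw [mem_sph] at hu
    obtain ⟨hadj, hdist⟩ := par_spec G hconn (v := v) (x := u) (by omega)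
    have hsub : ((sph G v (k+2)).filter (fun x => par G hconn v x = u)) ⊆
        (G.neighborFinset u).erase (par G hconn v u) := by
      intro x hx
      rw [Finset.mem_filter, mem_sph] at hx
      obtain ⟨hx1, hx2⟩ := hx
      have hps := par_spec G hconn (v := v) (x := x) (by omega)
      rw [hx2] at hps
      refine Finset.mem_erase.mpr ⟨fun he => by rw [he] at hx1; omega, ?_⟩
      rw [SimpleGraph.mem_neighborFinset]
      exact hps.1.symm
    calc _ ≤ ((G.neighborFinset u).erase (par G hconn v u)).card := Finset.card_le_card hsub
      _ = G.degree u - 1 := by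
          rw [Finset.card_erase_of_mem (by rwa [SimpleGraph.mem_neighborFinset])]
          rfl
      _ = Δ - 1 := by rw [rigid_regular G hconn hΔ h3 hγ hcomp hcard u]
  have hsum : ∑ u ∈ sph G v (k+1),
      ((sph G v (k+2)).filter (fun x => par G hconn v x = u)).card
      = ∑ u ∈ sph G v (k+1), (Δ - 1) := by
    rw [← Finset.card_eq_sum_card_fiberwise hmap, Finset.sum_const, smul_eq_mul]
    have h1 : (sph G v (k+2)).card = Δ * (Δ-1)^(k+1) :=
      rigid_sph G hconn hΔ h3 hγ hcomp hcard v (k+1) (Finset.mem_range.mpr (by omega))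
    have h2 : (sph G v (k+1)).card = Δ * (Δ-1)^k :=
      rigid_sph G hconn hΔ h3 hγ hcomp hcard v k (Finset.mem_range.mpr (by omega))
    rw [h1, h2, pow_succ]
    ring
  exact fun u hu => (Finset.sum_eq_sum_iff_of_le hfib).mp hsum u hu

include hconn hΔ h3 hγ hcomp hcard in
lemma rigid_nbhd (v : V) {k : ℕ} (hk : k + 2 ≤ γ) {u : V} (hu : u ∈ sph G v (k+1)) :
    G.neighborFinset u =
      insert (par G hconn v u) ((sph G v (k+2)).filter (fun x => par G hconn v x = u)) := by
  have hud : G.dist v u = k + 1 := (mem_sph G).mp hu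
  obtain ⟨hadj, hdist⟩ := par_spec G hconn (v := v) (x := u) (by omega)
  have hpar_notmem : par G hconn v u ∉ (sph G v (k+2)).filter (fun x => par G hconn v x = u) := by
    rw [Finset.mem_filter, mem_sph]
    rintro ⟨h1, -⟩
    omega
  have hsub : insert (par G hconn v u) ((sph G v (k+2)).filter (fun x => par G hconn v x = u))
      ⊆ G.neighborFinset u := by
    intro x hx
    rcases Finset.mem_insert.mp hx with rfl | hx
    · rwa [SimpleGraph.mem_neighborFinset]
    · rw [Finset.mem_filter, mem_sph] at hx
      obtain ⟨h1, h2⟩ := hx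
      have hps := par_spec G hconn (v := v) (x := x) (by omega)
      rw [h2] at hps
      rw [SimpleGraph.mem_neighborFinset]
      exact hps.1.symm
  symm
  apply Finset.eq_of_subset_of_card_le hsub
  rw [Finset.card_insert_of_notMem hpar_notmem,
    rigid_fiber G hconn hΔ h3 hγ hcomp hcard v hk u hu]
  rw [SimpleGraph.card_neighborFinset_eq_degree, rigid_regular G hconn hΔ h3 hγ hcomp hcard u]
  omega

end Rigid
section Rigid2

variable {V : Type*} [Fintype V] [DecidableEq V] (G : SimpleGraph V) [DecidableRel G.Adj]
variable (hconn : G.Connected) {Δ γ : ℕ} (hΔ : G.maxDegree = Δ) (h3 : 3 ≤ Δ) (hγ : 2 ≤ γ)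
variable (hcomp : ∀ x y : V, x ≠ y → (G.power γ).Adj x y)
variable (hcard : Fintype.card V = Δ * (∑ i ∈ Finset.range γ, (Δ - 1) ^ i) + 1)

include hconn hΔ h3 hγ hcomp hcard in
/-- unique parent: any neighbor one level closer to `v` is THE parent. -/
lemma rigid_par_unique {v u x : V} (h1 : 1 ≤ G.dist v u) (hadj : G.Adj u x)
    (hx : G.dist v x + 1 = G.dist v u) : x = par G hconn v u := by
  have huγ : G.dist v u ≤ γ := dist_le_diam G hcomp v u
  by_cases hcase : G.dist v u ≤ γ - 1
  · -- u is at level k+1 with k+2 ≤ γ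
    obtain ⟨k, hk⟩ : ∃ k, G.dist v u = k + 1 := ⟨G.dist v u - 1, by omega⟩
    have hu : u ∈ sph G v (k+1) := (mem_sph G).mpr hk
    have hN := rigid_nbhd G hconn hΔ h3 hγ hcomp hcard v (by omega : k + 2 ≤ γ) hu
    have hxN : x ∈ G.neighborFinset u := by rwa [SimpleGraph.mem_neighborFinset]
    rw [hN] at hxN
    rcases Finset.mem_insert.mp hxN with h | h
    · exact h
    · rw [Finset.mem_filter, mem_sph] at h
      omega
  · -- u is at level γ; use the neighborhood of x
    have huγ' : G.dist v u = γ := by omega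
    have hxd : G.dist v x = γ - 1 := by omega
    obtain ⟨k, hk⟩ : ∃ k, G.dist v x = k + 1 ∧ k + 2 ≤ γ := by
      refine ⟨γ - 2, by omega, by omega⟩
    have hx' : x ∈ sph G v (k+1) := (mem_sph G).mpr hk.1
    have hN := rigid_nbhd G hconn hΔ h3 hγ hcomp hcard v (by omega : k + 2 ≤ γ) hx'
    have huN : u ∈ G.neighborFinset x := by
      rw [SimpleGraph.mem_neighborFinset]; exact hadj.symm
    rw [hN] at huN
    rcases Finset.mem_insert.mp huN with h | h
    · -- u = par v x, but par v x is at level k < γ, contradiction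
      exfalso
      have := (par_spec G hconn (v := v) (x := x) (by omega)).2
      rw [← h] at this
      omega
    · rw [Finset.mem_filter] at h
      exact h.2.symm

include hconn hΔ h3 hγ hcomp hcard in
/-- levels of neighbors: adjacent vertices are on consecutive levels, except inside level γ. -/
lemma rigid_levels {v u x : V} (hadj : G.Adj u x) :
    (G.dist v x = G.dist v u + 1 ∨ G.dist v x + 1 = G.dist v u) ∨
      (G.dist v u = γ ∧ G.dist v x = γ) := by
  have hkey : ∀ y z : V, G.Adj y z → G.dist v y + 1 ≥ G.dist v z := by
    intro y z h
    have h1 : G.dist v z ≤ G.dist v y + G.dist y z := hconn.dist_triangle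
    have h2 : G.dist y z = 1 := SimpleGraph.dist_eq_one_iff_adj.mpr h
    omega
  have huγ : G.dist v u ≤ γ := dist_le_diam G hcomp v u
  have hxγ : G.dist v x ≤ γ := dist_le_diam G hcomp v x
  by_cases h0 : G.dist v u = 0
  · -- u = v
    have : v = u := hconn.dist_eq_zero_iff.mp h0
    subst this
    left; left
    rw [SimpleGraph.dist_eq_one_iff_adj.mpr hadj]
    omega
  · by_cases hcase : G.dist v u ≤ γ - 1
    · obtain ⟨k, hk⟩ : ∃ k, G.dist v u = k + 1 := ⟨G.dist v u - 1, by omega⟩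
      have hu : u ∈ sph G v (k+1) := (mem_sph G).mpr hk
      have hN := rigid_nbhd G hconn hΔ h3 hγ hcomp hcard v (by omega : k + 2 ≤ γ) hu
      have hxN : x ∈ G.neighborFinset u := by rwa [SimpleGraph.mem_neighborFinset]
      rw [hN] at hxN
      rcases Finset.mem_insert.mp hxN with h | h
      · left; right
        have := (par_spec G hconn (v := v) (x := u) (by omega)).2
        rw [← h] at this
        omega
      · left; left
        rw [Finset.mem_filter, mem_sph] at h
        omega
    · have huγ' : G.dist v u = γ := by omega
      have h1 := hkey u x hadj
      have h2 := hkey x u hadj.symm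
      rcases Nat.lt_or_ge (G.dist v x) γ with h | h
      · left; right; omega
      · right; omega

include hconn hΔ h3 hγ hcomp hcard in
/-- there is an edge inside the outermost sphere. -/
lemma rigid_lateral (v : V) :
    ∃ w w' : V, G.dist v w = γ ∧ G.dist v w' = γ ∧ G.Adj w w' := by
  have hsγ : (sph G v γ).card = Δ * (Δ - 1) ^ (γ - 1) := by
    have := rigid_sph G hconn hΔ h3 hγ hcomp hcard v (γ - 1) (Finset.mem_range.mpr (by omega))
    have he : γ - 1 + 1 = γ := by omega
    rwa [he] at this
  have hpos : 0 < (sph G v γ).card := by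
    rw [hsγ]
    have : 0 < (Δ - 1) ^ (γ - 1) := Nat.pow_pos (by omega)
    positivity
  obtain ⟨w, hw⟩ := Finset.card_pos.mp hpos
  rw [mem_sph] at hw
  refine ⟨w, ?_⟩
  by_contra hno
  push_neg at hno
  -- then all neighbors of w are at level γ - 1, hence all equal to par v w
  have hall : ∀ x ∈ G.neighborFinset w, x = par G hconn v w := by
    intro x hx
    rw [SimpleGraph.mem_neighborFinset] at hx
    have hlev := rigid_levels G hconn hΔ h3 hγ hcomp hcard (v := v) hx
    have hxγ : G.dist v x ≠ γ := by
      intro he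
      exact (hno x hw he hx).elim
    rcases hlev with (h | h) | h
    · have := dist_le_diam G hcomp v x
      omega
    · exact rigid_par_unique G hconn hΔ h3 hγ hcomp hcard (by omega) hx (by omega)
    · omega
  have hsub : G.neighborFinset w ⊆ {par G hconn v w} := by
    intro x hx
    rw [Finset.mem_singleton]
    exact hall x hx
  have hdeg : G.degree w ≤ 1 := by
    rw [← SimpleGraph.card_neighborFinset_eq_degree]
    calc (G.neighborFinset w).card ≤ ({par G hconn v w} : Finset V).card :=
          Finset.card_le_card hsub
      _ = 1 := Finset.card_singleton _
  rw [rigid_regular G hconn hΔ h3 hγ hcomp hcard w] at hdeg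
  omega

end Rigid2
section Chain

variable {V : Type*} [Fintype V] [DecidableEq V] (G : SimpleGraph V) [DecidableRel G.Adj]
variable (hconn : G.Connected)

lemma anc_dist {v x : V} {k : ℕ} (hk : k ≤ G.dist v x) :
    G.dist v ((par G hconn v)^[k] x) = G.dist v x - k := by
  induction k with
  | zero => simp
  | succ n ih =>
    rw [Function.iterate_succ_apply']
    have hn : G.dist v ((par G hconn v)^[n] x) = G.dist v x - n := ih (by omega)
    have := (par_spec G hconn (v := v) (x := (par G hconn v)^[n] x) (by omega)).2
    omega

lemma anc_full {v x : V} : (par G hconn v)^[G.dist v x] x = v := by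
  have h := anc_dist G hconn (v := v) (x := x) (le_refl (G.dist v x))
  have h2 : G.dist v ((par G hconn v)^[G.dist v x] x) = 0 := by omega
  exact (hconn.dist_eq_zero_iff.mp h2).symm

/-- canonical walk descending along parents. -/
noncomputable def dwn (v : V) : (k : ℕ) → (x : V) → k ≤ G.dist v x → G.Walk x ((par G hconn v)^[k] x)
  | 0, x, _ => SimpleGraph.Walk.nil.copy rfl (by simp)
  | (k+1), x, h =>
      ((dwn v k (par G hconn v x) (by
          have := (par_spec G hconn (v := v) (x := x) (by omega)).2
          omega)).cons (par_spec G hconn (v := v) (x := x) (by omega : 0 < G.dist v x)).1).copy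
        rfl (by rw [← Function.iterate_succ_apply])

lemma dwn_length (v : V) (k : ℕ) (x : V) (h : k ≤ G.dist v x) :
    (dwn G hconn v k x h).length = k := by
  induction k generalizing x with
  | zero => simp [dwn]
  | succ n ih => simp [dwn, ih]

lemma dwn_support (v : V) (k : ℕ) (x : V) (h : k ≤ G.dist v x) {z : V} :
    z ∈ (dwn G hconn v k x h).support ↔ ∃ t, t ≤ k ∧ z = (par G hconn v)^[t] x := by
  induction k generalizing x with
  | zero =>
    simp only [dwn, SimpleGraph.Walk.support_copy, SimpleGraph.Walk.support_nil,
      List.mem_singleton]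
    constructor
    · intro hz; exact ⟨0, le_refl _, by simpa using hz⟩
    · rintro ⟨t, ht, rfl⟩
      have : t = 0 := by omega
      simp [this]
  | succ n ih =>
    simp only [dwn, SimpleGraph.Walk.support_copy, SimpleGraph.Walk.support_cons,
      List.mem_cons]
    rw [ih]
    constructor
    · rintro (rfl | ⟨t, ht, rfl⟩)
      · exact ⟨0, by omega, by simp⟩
      · exact ⟨t + 1, by omega, by rw [Function.iterate_succ_apply]⟩
    · rintro ⟨t, ht, rfl⟩
      cases t with
      | zero => left; simp
      | succ s => right; exact ⟨s, by omega, by rw [Function.iterate_succ_apply]⟩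

lemma dwn_isPath (v : V) (k : ℕ) (x : V) (h : k ≤ G.dist v x) :
    (dwn G hconn v k x h).IsPath := by
  induction k generalizing x with
  | zero =>
    simp only [dwn]
    exact (SimpleGraph.Walk.isPath_copy _ _ _).mpr SimpleGraph.Walk.IsPath.nil
  | succ n ih =>
    simp only [dwn]
    rw [SimpleGraph.Walk.isPath_copy, SimpleGraph.Walk.cons_isPath_iff]
    refine ⟨ih _ _, ?_⟩
    rw [dwn_support]
    rintro ⟨t, ht, hx⟩
    rw [← Function.iterate_succ_apply] at hx
    have hd : G.dist v ((par G hconn v)^[t+1] x) = G.dist v x - (t+1) :=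
      anc_dist G hconn (by omega)
    rw [← hx] at hd
    omega

end Chain
section RigidCycle

variable {V : Type*} [Fintype V] [DecidableEq V] (G : SimpleGraph V) [DecidableRel G.Adj]
variable (hconn : G.Connected) {Δ γ : ℕ} (hΔ : G.maxDegree = Δ) (h3 : 3 ≤ Δ) (hγ : 2 ≤ γ)
variable (hcomp : ∀ x y : V, x ≠ y → (G.power γ).Adj x y)
variable (hcard : Fintype.card V = Δ * (∑ i ∈ Finset.range γ, (Δ - 1) ^ i) + 1)

include hconn hΔ h3 hγ hcomp hcard in
lemma rigid_cycle (v : V) :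
    ∃ (x : V) (C : G.Walk x x), C.IsCycle ∧ 3 ≤ C.length ∧ C.length ≤ 2 * γ + 1 := by
  classical
  obtain ⟨w, w', hw, hw', hadj⟩ := rigid_lateral G hconn hΔ h3 hγ hcomp hcard v
  have hww' : w ≠ w' := G.ne_of_adj hadj
  set pr : V → V := par G hconn v with hpr
  -- the meeting level
  set A : Finset ℕ := (Finset.range (γ+1)).filter (fun i => pr^[γ-i] w = pr^[γ-i] w') with hA
  have h0A : 0 ∈ A := by
    rw [hA, Finset.mem_filter]
    refine ⟨Finset.mem_range.mpr (by omega), ?_⟩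
    simp only [Nat.sub_zero]
    have e1 : pr^[γ] w = v := by
      have := anc_full G hconn (v := v) (x := w); rwa [hw] at this
    have e2 : pr^[γ] w' = v := by
      have := anc_full G hconn (v := v) (x := w'); rwa [hw'] at this
    rw [e1, e2]
  have hAne : A.Nonempty := ⟨0, h0A⟩
  set j : ℕ := A.max' hAne with hj
  have hjA : j ∈ A := A.max'_mem hAne
  have hjγ : j ≤ γ := by
    have := (Finset.mem_filter.mp hjA).1
    rw [Finset.mem_range] at this
    omega
  have hjne : j ≠ γ := by
    intro he
    have := (Finset.mem_filter.mp hjA).2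
    rw [he] at this
    simp only [Nat.sub_self, Function.iterate_zero_apply] at this
    exact hww' this
  set K : ℕ := γ - j with hK
  have hK1 : 1 ≤ K := by omega
  have hKγ : K ≤ γ := by omega
  have hm : pr^[K] w' = pr^[K] w := ((Finset.mem_filter.mp hjA).2).symm
  -- cross lemma
  have hcross : ∀ t s : ℕ, t ≤ K → s ≤ K → pr^[t] w = pr^[s] w' → t = K ∧ s = K := by
    intro t s ht hs he
    have d1 : G.dist v (pr^[t] w) = γ - t := by
      have := anc_dist G hconn (v := v) (x := w) (k := t) (by omega)
      rwa [hw] at this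
    have d2 : G.dist v (pr^[s] w') = γ - s := by
      have := anc_dist G hconn (v := v) (x := w') (k := s) (by omega)
      rwa [hw'] at this
    have hts : t = s := by rw [he] at d1; omega
    subst hts
    have hiA : γ - t ∈ A := by
      rw [hA, Finset.mem_filter]
      refine ⟨Finset.mem_range.mpr (by omega), ?_⟩
      have hgt : γ - (γ - t) = t := by omega
      rw [hgt]
      exact he
    have := A.le_max' _ hiA
    rw [← hj] at this
    omega
  -- the two descending walks
  have hdw : K ≤ G.dist v w := by omega
  have hdw' : K ≤ G.dist v w' := by omega
  set P : G.Walk w (pr^[K] w) := dwn G hconn v K w (by rw [hw]; omega) with hP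
  set P' : G.Walk w' (pr^[K] w') := dwn G hconn v K w' (by rw [hw']; omega) with hP'
  set P'' : G.Walk w' (pr^[K] w) := P'.copy rfl hm with hP''
  set C : G.Walk (pr^[K] w) (pr^[K] w) := P.reverse.append (SimpleGraph.Walk.cons hadj P'')
    with hC
  have hPpath : P.IsPath := dwn_isPath G hconn v K w _
  have hP'path : P'.IsPath := dwn_isPath G hconn v K w' _
  have hPsup : ∀ {z}, z ∈ P.support ↔ ∃ t, t ≤ K ∧ z = pr^[t] w :=
    fun {z} => dwn_support G hconn v K w _
  have hP'sup : ∀ {z}, z ∈ P'.support ↔ ∃ t, t ≤ K ∧ z = pr^[t] w' :=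
    fun {z} => dwn_support G hconn v K w' _
  -- lengths
  have hClen : C.length = 2 * K + 1 := by
    rw [hC, SimpleGraph.Walk.length_append, SimpleGraph.Walk.length_reverse,
      SimpleGraph.Walk.length_cons, hP'', SimpleGraph.Walk.length_copy, hP, hP',
      dwn_length, dwn_length]
    omega
  -- membership exclusions
  have hwP' : w ∉ P'.support := by
    rw [hP'sup]
    rintro ⟨t, ht, hte⟩
    obtain ⟨ht1, ht2⟩ := hcross 0 t (by omega) ht (by simpa using hte)
    omega
  have hw'P : w' ∉ P.support := by
    rw [hPsup]
    rintro ⟨t, ht, hte⟩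
    obtain ⟨ht1, ht2⟩ := hcross t 0 ht (by omega) (by simpa using hte.symm)
    omega
  -- support tail nodup
  have hCsupp : C.support.tail = P.reverse.support.tail ++ P'.support := by
    rw [hC, SimpleGraph.Walk.tail_support_append]
    congr 1
    rw [SimpleGraph.Walk.support_cons]
    simp only [List.tail_cons]
    rw [hP'', SimpleGraph.Walk.support_copy]
  have hRnodup : P.reverse.support.Nodup := hPpath.reverse.support_nodup
  have hRtail : P.reverse.support = pr^[K] w :: P.reverse.support.tail :=
    SimpleGraph.Walk.support_eq_cons _
  have hmR : pr^[K] w ∉ P.reverse.support.tail := by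
    intro hmem
    rw [hRtail] at hRnodup
    exact (List.nodup_cons.mp hRnodup).1 hmem
  have hdisj : ∀ z ∈ P.reverse.support.tail, z ∉ P'.support := by
    intro z hz hz'
    have hzP : z ∈ P.support := by
      have hzR : z ∈ P.reverse.support := by
        rw [hRtail]; exact List.mem_cons_of_mem _ hz
      rwa [SimpleGraph.Walk.support_reverse, List.mem_reverse] at hzR
    obtain ⟨t, ht, rfl⟩ := hPsup.mp hzP
    obtain ⟨s, hs, hse⟩ := hP'sup.mp hz'
    obtain ⟨ht1, hs1⟩ := hcross t s ht hs hse
    subst ht1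
    exact hmR hz
  have htailnodup : C.support.tail.Nodup := by
    rw [hCsupp]
    rw [List.nodup_append]
    exact ⟨hRnodup.tail, hP'path.support_nodup,
      fun z hz z' hz' hzz => by subst hzz; exact hdisj z hz hz'⟩
  -- trail
  have hCedges : C.edges = P.reverse.edges ++ (s(w, w') :: P'.edges) := by
    rw [hC, SimpleGraph.Walk.edges_append, SimpleGraph.Walk.edges_cons, hP'',
      SimpleGraph.Walk.edges_copy]
  have hsharedsup : ∀ z, z ∈ P.support → z ∈ P'.support → z = pr^[K] w := by
    intro z h1 h2
    obtain ⟨t, ht, rfl⟩ := hPsup.mp h1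
    obtain ⟨s, hs, hse⟩ := hP'sup.mp h2
    obtain ⟨ht1, -⟩ := hcross t s ht hs hse
    rw [ht1]
  have hedge_notP : s(w, w') ∉ P.edges := by
    intro hmem
    exact hw'P (SimpleGraph.Walk.snd_mem_support_of_mem_edges _ hmem)
  have hedge_notP' : s(w, w') ∉ P'.edges := by
    intro hmem
    exact hwP' (SimpleGraph.Walk.fst_mem_support_of_mem_edges _ hmem)
  have hedisj : ∀ e ∈ P.reverse.edges, e ∉ (s(w, w') :: P'.edges) := by
    intro e he hmem
    rw [SimpleGraph.Walk.edges_reverse, List.mem_reverse] at he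
    rcases List.mem_cons.mp hmem with rfl | hmem'
    · exact hedge_notP he
    · -- e is an edge of both P and P'
      induction e with
      | h x y =>
        have hx1 : x ∈ P.support := SimpleGraph.Walk.fst_mem_support_of_mem_edges _ he
        have hy1 : y ∈ P.support := SimpleGraph.Walk.snd_mem_support_of_mem_edges _ he
        have hx2 : x ∈ P'.support := SimpleGraph.Walk.fst_mem_support_of_mem_edges _ hmem'
        have hy2 : y ∈ P'.support := SimpleGraph.Walk.snd_mem_support_of_mem_edges _ hmem'
        have hxm := hsharedsup x hx1 hx2
        have hym := hsharedsup y hy1 hy2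
        have : ¬ (s(x,y) : Sym2 V).IsDiag :=
          SimpleGraph.not_isDiag_of_mem_edgeSet G (SimpleGraph.Walk.edges_subset_edgeSet _ he)
        rw [Sym2.isDiag_iff_proj_eq] at this
        exact this (by rw [hxm, hym])
  have hCtrail : C.IsTrail := by
    rw [SimpleGraph.Walk.isTrail_def, hCedges, List.nodup_append]
    refine ⟨?_, ?_, fun e he e' he' hee => by subst hee; exact hedisj e he he'⟩
    · rw [← SimpleGraph.Walk.isTrail_def]
      exact hPpath.reverse.isTrail
    · rw [List.nodup_cons]
      exact ⟨hedge_notP', hP'path.isTrail.edges_nodup⟩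
  have hCne : C ≠ SimpleGraph.Walk.nil := by
    intro h
    have := congrArg SimpleGraph.Walk.length h
    rw [hClen] at this
    simp at this
  refine ⟨pr^[K] w, C, ?_, by omega, by omega⟩
  rw [SimpleGraph.Walk.isCycle_def]
  exact ⟨hCtrail, hCne, htailnodup⟩

end RigidCycle
section MinCycle

variable {V : Type*} [Fintype V] [DecidableEq V] (G : SimpleGraph V) [DecidableRel G.Adj]
variable (hconn : G.Connected) {Δ γ : ℕ} (hΔ : G.maxDegree = Δ) (h3 : 3 ≤ Δ) (hγ : 2 ≤ γ)
variable (hcomp : ∀ x y : V, x ≠ y → (G.power γ).Adj x y)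
variable (hcard : Fintype.card V = Δ * (∑ i ∈ Finset.range γ, (Δ - 1) ^ i) + 1)

lemma walk_support_getElem {u v : V} (W : G.Walk u v) :
    ∀ j, j ≤ W.length → W.support[j]? = some (W.getVert j) := by
  induction W with
  | nil =>
    intro j hj
    simp only [SimpleGraph.Walk.length_nil, Nat.le_zero] at hj
    subst hj
    simp [SimpleGraph.Walk.support_nil, SimpleGraph.Walk.getVert_zero]
  | cons h p ih =>
    intro j hj
    cases j with
    | zero => simp [SimpleGraph.Walk.support_cons, SimpleGraph.Walk.getVert_zero]
    | succ n =>
      simp only [SimpleGraph.Walk.length_cons] at hj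
      rw [SimpleGraph.Walk.support_cons, SimpleGraph.Walk.getVert_cons_succ]
      simpa using ih n (by omega)

lemma cycle_getVert_inj {a : V} {W : G.Walk a a} (hW : W.IsCycle) :
    ∀ j1 j2, 1 ≤ j1 → j1 < j2 → j2 ≤ W.length → W.getVert j1 ≠ W.getVert j2 := by
  intro j1 j2 h1 h12 h2 he
  have hnodup : W.support.tail.Nodup := ((SimpleGraph.Walk.isCycle_def W).mp hW).2.2
  have htl : W.support.tail.length = W.length := by
    have := W.length_support
    rw [List.length_tail, this]
    omega
  have e1 : W.support.tail[j1 - 1]? = some (W.getVert j1) := by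
    rw [← List.drop_one, List.getElem?_drop]
    have hI : 1 + (j1 - 1) = j1 := by omega
    rw [hI]
    exact walk_support_getElem G W j1 (by omega)
  have e2 : W.support.tail[j2 - 1]? = some (W.getVert j2) := by
    rw [← List.drop_one, List.getElem?_drop]
    have hI : 1 + (j2 - 1) = j2 := by omega
    rw [hI]
    exact walk_support_getElem G W j2 (by omega)
  rw [he] at e1
  have := (List.getElem?_inj (by omega : j1 - 1 < W.support.tail.length) hnodup).mp
    (e1.trans e2.symm)
  omega

include hconn hΔ h3 hγ hcomp hcard in
lemma rigid_min_cycle (a : V) (W : G.Walk a a) (hW : W.IsCycle) : 2 * γ + 1 ≤ W.length := by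
  by_contra hlen
  push_neg at hlen
  have hL3 : 3 ≤ W.length := hW.three_le_length
  set L := W.length with hLdef
  have hstep1 : ∀ j, j < L → G.dist a (W.getVert (j+1)) ≤ G.dist a (W.getVert j) + 1 := by
    intro j hj
    have hadj := W.adj_getVert_succ hj
    have h1 : G.dist a (W.getVert (j+1)) ≤ G.dist a (W.getVert j)
        + G.dist (W.getVert j) (W.getVert (j+1)) := hconn.dist_triangle
    rw [SimpleGraph.dist_eq_one_iff_adj.mpr hadj] at h1
    exact h1
  have hstep2 : ∀ j, j < L → G.dist a (W.getVert j) ≤ G.dist a (W.getVert (j+1)) + 1 := by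
    intro j hj
    have hadj := (W.adj_getVert_succ hj).symm
    have h1 : G.dist a (W.getVert j) ≤ G.dist a (W.getVert (j+1))
        + G.dist (W.getVert (j+1)) (W.getVert j) := hconn.dist_triangle
    rw [SimpleGraph.dist_eq_one_iff_adj.mpr hadj] at h1
    exact h1
  have hup : ∀ j, j ≤ L → G.dist a (W.getVert j) ≤ j := by
    intro j
    induction j with
    | zero => intro _; simp [SimpleGraph.Walk.getVert_zero]
    | succ n ih =>
      intro hj
      have := hstep1 n (by omega)
      have := ih (by omega)
      omega
  have hdown : ∀ t j, j + t = L → G.dist a (W.getVert j) ≤ t := by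
    intro t
    induction t with
    | zero =>
      intro j hj
      have : j = L := by omega
      rw [this, hLdef, SimpleGraph.Walk.getVert_length]
      simp
    | succ n ih =>
      intro j hj
      have h1 := hstep2 j (by omega)
      have h2 := ih (j+1) (by omega)
      omega
  obtain ⟨k, hkmem, hkmax⟩ := Finset.exists_max_image (Finset.range (L+1))
    (fun j => G.dist a (W.getVert j)) ⟨0, by simp⟩
  rw [Finset.mem_range] at hkmem
  set m := G.dist a (W.getVert k) with hm
  have hgv1 : G.dist a (W.getVert 1) = 1 := by
    apply SimpleGraph.dist_eq_one_iff_adj.mpr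
    have := W.adj_getVert_succ (by omega : 0 < L)
    simpa [SimpleGraph.Walk.getVert_zero] using this
  have hm1 : 1 ≤ m := by
    have := hkmax 1 (Finset.mem_range.mpr (by omega))
    omega
  have hmk : m ≤ k := by
    have := hup k (by omega)
    omega
  have hmLk : m ≤ L - k := by
    have := hdown (L - k) k (by omega)
    omega
  have hk1 : 1 ≤ k := by omega
  have hkL : k < L := by omega
  have hmγ : m ≤ γ := dist_le_diam G hcomp a _
  have hadjp : G.Adj (W.getVert k) (W.getVert (k-1)) := by
    have := W.adj_getVert_succ (by omega : k - 1 < L)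
    have hI : k - 1 + 1 = k := by omega
    rw [hI] at this
    exact this.symm
  have hadjq : G.Adj (W.getVert k) (W.getVert (k+1)) := W.adj_getVert_succ (by omega)
  have hlevp : G.dist a (W.getVert (k-1)) + 1 = m := by
    have hle : G.dist a (W.getVert (k-1)) ≤ m := hkmax _ (Finset.mem_range.mpr (by omega))
    rcases rigid_levels G hconn hΔ h3 hγ hcomp hcard (v := a) hadjp with (h | h) | h
    · omega
    · omega
    · -- m = γ and level of p = γ; but then by hup/hdown L ≥ 2γ + something
      exfalso
      obtain ⟨hmg, hpg⟩ := h
      have h1 := hup (k-1) (by omega)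
      have h2 := hdown (L - (k-1)) (k-1) (by omega)
      rw [← hm] at hmg
      omega
  have hlevq : G.dist a (W.getVert (k+1)) + 1 = m := by
    have hle : G.dist a (W.getVert (k+1)) ≤ m := hkmax _ (Finset.mem_range.mpr (by omega))
    rcases rigid_levels G hconn hΔ h3 hγ hcomp hcard (v := a) hadjq with (h | h) | h
    · omega
    · omega
    · exfalso
      obtain ⟨hmg, hqg⟩ := h
      have h1 := hup (k+1) (by omega)
      have h2 := hdown (L - (k+1)) (k+1) (by omega)
      rw [← hm] at hmg
      omega
  have hpq : W.getVert (k-1) = W.getVert (k+1) := by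
    have hp := rigid_par_unique G hconn hΔ h3 hγ hcomp hcard (v := a) (u := W.getVert k)
      (by omega) hadjp (by omega)
    have hq := rigid_par_unique G hconn hΔ h3 hγ hcomp hcard (v := a) (u := W.getVert k)
      (by omega) hadjq (by omega)
    rw [hp, hq]
  -- now derive the contradiction via injectivity
  by_cases hk2 : 1 ≤ k - 1
  · exact cycle_getVert_inj G hW (k-1) (k+1) hk2 (by omega) (by omega) hpq
  · -- k = 1
    have hke : k = 1 := by omega
    rw [hke] at hpq
    simp only [Nat.sub_self, SimpleGraph.Walk.getVert_zero] at hpq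
    -- getVert 0 = a = getVert L
    by_cases hkL2 : 2 < L
    · have hWL : W.getVert 2 ≠ W.getVert L :=
        cycle_getVert_inj G hW 2 L (by omega) (by omega) (by omega)
      rw [hLdef, SimpleGraph.Walk.getVert_length] at hWL
      exact hWL hpq.symm
    · omega

end MinCycle
/-- If the girth of G is not 2γ+1, then χ_γ(G) ≤ M. -/
theorem chromaticNumber_le_M_of_girth_ne {V : Type*} [Fintype V] [DecidableEq V]
    (G : SimpleGraph V) [DecidableRel G.Adj] (hconn : G.Connected) (Δ γ : ℕ)
    (hΔ : G.maxDegree = Δ) (h3 : 3 ≤ Δ) (hγ : 2 ≤ γ)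
    (hg : G.egirth ≠ ((2 * γ + 1 : ℕ) : ℕ∞)) :
    (G.power γ).chromaticNumber ≤ ((Δ * ((Δ - 1) ^ γ - 1) / (Δ - 2) : ℕ) : ℕ∞) := by
  classical
  have hM : Δ * ((Δ - 1) ^ γ - 1) / (Δ - 2) = Δ * (∑ i ∈ Finset.range γ, (Δ - 1) ^ i) :=
    M_eq Δ γ h3
  rw [hM, SimpleGraph.chromaticNumber_le_iff_colorable]
  have hTpos : 0 < ∑ i ∈ Finset.range γ, (Δ - 1) ^ i := Tpos h3 hγ
  have hMpos : 0 < Δ * (∑ i ∈ Finset.range γ, (Δ - 1) ^ i) := Nat.mul_pos (by omega) hTpos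
  have hpd : ∀ x : V, (G.power γ).degree x ≤ Δ * (∑ i ∈ Finset.range γ, (Δ - 1) ^ i) := by
    intro x
    have := ball_bound' G hconn γ x
    rwa [hΔ] at this
  by_cases htrip : ∃ v a b : V, (G.power γ).Adj v a ∧ (G.power γ).Adj v b ∧ a ≠ b ∧
      ¬ (G.power γ).Adj a b
  · obtain ⟨v, a, b, h1, h2, h3', h4⟩ := htrip
    exact case_triple G hconn hγ hMpos hpd h1 h2 h3' h4
  · push_neg at htrip
    have hcomp : ∀ x y : V, x ≠ y → (G.power γ).Adj x y :=
      no_triple_complete G hconn hγ htrip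
    have hne : Nonempty V := hconn.nonempty
    obtain ⟨x0⟩ := hne
    have h5 := complete_pdeg G hconn hcomp x0
    have h6 := hpd x0
    have h7 : 0 < Fintype.card V := Fintype.card_pos_iff.mpr ⟨x0⟩
    have hn : Fintype.card V ≤ Δ * (∑ i ∈ Finset.range γ, (Δ - 1) ^ i) + 1 := by omega
    rcases Nat.lt_or_ge (Fintype.card V) (Δ * (∑ i ∈ Finset.range γ, (Δ - 1) ^ i) + 1)
      with hlt | hge
    · exact ((G.power γ).colorable_of_fintype).mono (by omega)
    · exfalso
      have hcard : Fintype.card V = Δ * (∑ i ∈ Finset.range γ, (Δ - 1) ^ i) + 1 := by omega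
      obtain ⟨x, C, hC, hC3, hCle⟩ := rigid_cycle G hconn hΔ h3 hγ hcomp hcard x0
      have hmin := rigid_min_cycle G hconn hΔ h3 hγ hcomp hcard
      have hClen : C.length = 2 * γ + 1 := le_antisymm hCle (hmin x C hC)
      have h1 : G.egirth ≤ ((2 * γ + 1 : ℕ) : ℕ∞) := by
        have := SimpleGraph.le_egirth.mp (le_refl G.egirth) x C hC
        rw [hClen] at this
        exact this
      have h2 : ((2 * γ + 1 : ℕ) : ℕ∞) ≤ G.egirth := by
        apply SimpleGraph.le_egirth.mpr
        intro a w hw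
        exact_mod_cast Nat.cast_le.mpr (hmin a w hw)
      exact hg (le_antisymm h1 h2)
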